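/- For every integer b ≥ 1 and every function f : {0,1}^b × {0,1}^b → {0,1}, there exists a two-outcome POVM (E0, E1) on ℂ^{2^{b+1}} such that for all a0, a1 ∈ {0,1}^b, ⟨Ψ_{a0 a1}, E_{f(a0,a1)} Ψ_{a0 a1}⟩ = 1/2 + 1/2^{b+1}. In other words, any Boolean function f(a0, a1) of the two b-bit halves can be computed with success probability exactly 1/2 + 1/2^{b+1} by a measurement of one copy of the superposition Ψ_{a0 a1}. -/

import Mathlib

open ComplexOrder Matrix

/-- The state `Ψ_{a0 a1} = (1/√2)(|0⟩⊗|a0⟩ + |1⟩⊗|a1⟩)` in `ℂ² ⊗ ℂ^{2^b}`,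
written as a vector indexed by the standard basis `Bool × (Fin b → Bool)`. -/
noncomputable def Psi (b : ℕ) (a0 a1 : Fin b → Bool) : Bool × (Fin b → Bool) → ℂ :=
  fun p =>
    ((if p = (false, a0) then 1 else 0) + (if p = (true, a1) then 1 else 0)) /
      (Real.sqrt 2 : ℂ)

noncomputable def phiV (b : ℕ) (f : (Fin b → Bool) → (Fin b → Bool) → Bool)
    (k : Bool) (a a' : Fin b → Bool) : Bool × (Fin b → Bool) → ℂ :=
  fun p => (if p = (false, a) then 1 else 0) +
    (if p = (true, a') then (if f a a' = k then 1 else -1) else 0)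

lemma star_phiV (b f k a a') : star (phiV b f k a a') = phiV b f k a a' := by
  funext p
  simp only [Pi.star_apply, phiV]
  split_ifs <;> simp

lemma psd_outer {n : Type*} [Fintype n] (v : n → ℂ) :
    (Matrix.vecMulVec v (star v)).PosSemidef := by
  have h : Matrix.vecMulVec v (star v) = Matrix.replicateCol Unit v * (Matrix.replicateCol Unit v)ᴴ := by
    rw [Matrix.conjTranspose_replicateCol, ← Matrix.vecMulVec_eq Unit]
  rw [h]
  exact Matrix.posSemidef_self_mul_conjTranspose _

lemma psd_smul {n : Type*} [Fintype n] {M : Matrix n n ℂ} (hM : M.PosSemidef) {r : ℝ}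
    (hr : 0 ≤ r) : ((r : ℂ) • M).PosSemidef := by
  constructor
  · unfold Matrix.IsHermitian
    rw [Matrix.conjTranspose_smul, hM.1]
    simp [Complex.star_def, Complex.conj_ofReal]
  · exact (hM.smul (by exact_mod_cast hr : (0:ℂ) ≤ (r:ℂ))).2
  
lemma psd_sum {n : Type*} [Fintype n] {ι' : Type*} (s : Finset ι') (F : ι' → Matrix n n ℂ)
    (h : ∀ i ∈ s, (F i).PosSemidef) : (∑ i ∈ s, F i).PosSemidef := by
  classical
  induction s using Finset.induction with
  | empty => simpa using Matrix.PosSemidef.zero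
  | insert x s hx ih =>
      rw [Finset.sum_insert hx]
      exact (h _ (Finset.mem_insert_self _ _)).add
        (ih fun i hi => h i (Finset.mem_insert_of_mem hi))

lemma vecMulVec_mulVec' {n : Type*} [Fintype n] (v w x : n → ℂ) :
    Matrix.vecMulVec v w *ᵥ x = (w ⬝ᵥ x) • v := by
  funext i
  simp [Matrix.mulVec, Matrix.vecMulVec_apply, dotProduct, Finset.sum_mul, Finset.mul_sum]
  exact Finset.sum_congr rfl fun j _ => by ring

example (b : ℕ) (f : (Fin b → Bool) → (Fin b → Bool) → Bool) (p q : Bool × (Fin b → Bool)) :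
    ∑ a : Fin b → Bool, ∑ a' : Fin b → Bool,
      (phiV b f false a a' p * phiV b f false a a' q +
        phiV b f true a a' p * phiV b f true a a' q)
    = if p = q then (2 ^ (b + 1) : ℂ) else 0 := by
  have pt : ∀ a a' : Fin b → Bool,
      phiV b f false a a' p * phiV b f false a a' q +
        phiV b f true a a' p * phiV b f true a a' q
      = 2 * ((if p = (false, a) then 1 else 0) * (if q = (false, a) then 1 else 0)) +
        2 * ((if p = (true, a') then 1 else 0) * (if q = (true, a') then 1 else 0)) := by
    intro a a'
    cases hc : f a a' <;> simp only [phiV, hc] <;> split_ifs <;> simp_all <;> ring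
  simp only [pt, Finset.sum_add_distrib, Finset.sum_const, Finset.card_univ]
  obtain ⟨cp, ap⟩ := p
  obtain ⟨cq, aq⟩ := q
  cases cp <;> cases cq <;>
    simp [Prod.mk.injEq, mul_ite, ite_mul, Finset.sum_ite_eq, Finset.sum_ite_eq',
      eq_comm, Fintype.card_fun, pow_succ, nsmul_eq_mul] <;> split_ifs <;> ring

lemma star_Psi (b a0 a1) : star (Psi b a0 a1) = Psi b a0 a1 := by
  funext p
  simp only [Pi.star_apply, Psi]
  split_ifs <;> simp [Complex.conj_ofReal]

lemma hdot (b : ℕ) (f : (Fin b → Bool) → (Fin b → Bool) → Bool) (k : Bool)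
    (a a' a0 a1 : Fin b → Bool) :
    phiV b f k a a' ⬝ᵥ Psi b a0 a1
      = ((if a = a0 then 1 else 0) +
          (if f a a' = k then 1 else -1) * (if a' = a1 then 1 else 0)) /
        (Real.sqrt 2 : ℂ) := by
  simp only [dotProduct, phiV, Psi, ← mul_div_assoc]
  rw [← Finset.sum_div]
  congr 1
  have key : ∀ p : Bool × (Fin b → Bool),
      ((if p = (false, a) then (1:ℂ) else 0) +
        (if p = (true, a') then (if f a a' = k then 1 else -1) else 0)) *
        ((if p = (false, a0) then 1 else 0) + (if p = (true, a1) then 1 else 0))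
      = (if p = (false, a) then 1 else 0) * (if p = (false, a0) then 1 else 0) +
        (if p = (true, a') then (if f a a' = k then (1:ℂ) else -1) else 0) *
          (if p = (true, a1) then 1 else 0) := by
    intro p
    obtain ⟨c, ap⟩ := p
    cases c <;> simp [Prod.mk.injEq] <;> split_ifs <;> ring
  rw [Finset.sum_congr rfl fun p _ => key p]
  simp only [mul_ite, ite_mul, mul_one, mul_zero, one_mul, zero_mul, mul_neg, neg_zero,
    ite_self, Finset.sum_add_distrib, Finset.sum_ite_eq', Finset.mem_univ, if_true,
    Prod.mk.injEq, true_and, false_and, and_true, if_false]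
  clear key
  split_ifs <;> subst_vars <;> simp_all <;> ring

lemma sum_mulVec' {n m : Type*} [Fintype n] [Fintype m] {ι' : Type*} (s : Finset ι')
    (F : ι' → Matrix m n ℂ) (x : n → ℂ) :
    (∑ i ∈ s, F i) *ᵥ x = ∑ i ∈ s, F i *ᵥ x := by
  funext j
  simp only [Matrix.mulVec, dotProduct, Matrix.sum_apply, Finset.sum_apply, Finset.sum_mul]
  rw [Finset.sum_comm]

lemma dotProduct_sum' {n : Type*} [Fintype n] {ι' : Type*} (s : Finset ι')
    (v : n → ℂ) (w : ι' → n → ℂ) :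
    v ⬝ᵥ (∑ i ∈ s, w i) = ∑ i ∈ s, v ⬝ᵥ w i := by
  simp only [dotProduct, Finset.sum_apply, Finset.mul_sum]
  rw [Finset.sum_comm]

/-- for every `b ≥ 1` and every `f : {0,1}^b × {0,1}^b → {0,1}` there is a
two-outcome POVM `(E0, E1)` on `ℂ^{2^{b+1}}` such that for all `a0, a1`,
`⟨Ψ_{a0 a1}, E_{f(a0,a1)} Ψ_{a0 a1}⟩ = 1/2 + 1/2^{b+1}`. -/
theorem stmt2 (b : ℕ) (hb : 1 ≤ b)
    (f : (Fin b → Bool) → (Fin b → Bool) → Bool) :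
    ∃ E : Bool → Matrix (Bool × (Fin b → Bool)) (Bool × (Fin b → Bool)) ℂ,
      (E false).PosSemidef ∧ (E true).PosSemidef ∧ E false + E true = 1 ∧
      ∀ a0 a1 : Fin b → Bool,
        star (Psi b a0 a1) ⬝ᵥ (E (f a0 a1) *ᵥ Psi b a0 a1) =
          (1 / 2 + 1 / 2 ^ (b + 1) : ℂ) := by
  classical
  set c : ℝ := ((2 : ℝ) ^ (b + 1))⁻¹ with hc
  have psdE : ∀ k, ((c : ℂ) • ∑ a : Fin b → Bool, ∑ a' : Fin b → Bool,
      Matrix.vecMulVec (phiV b f k a a') (phiV b f k a a')).PosSemidef := by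
    intro k
    refine psd_smul (psd_sum _ _ fun a _ => psd_sum _ _ fun a' _ => ?_) (by positivity)
    have h := psd_outer (phiV b f k a a')
    rwa [star_phiV] at h
  refine ⟨fun k => (c : ℂ) • ∑ a : Fin b → Bool, ∑ a' : Fin b → Bool,
      Matrix.vecMulVec (phiV b f k a a') (phiV b f k a a'), psdE false, psdE true, ?_, ?_⟩
  · ext p q
    have key : ∑ a : Fin b → Bool, ∑ a' : Fin b → Bool,
        (phiV b f false a a' p * phiV b f false a a' q +
          phiV b f true a a' p * phiV b f true a a' q)
        = if p = q then (2 ^ (b + 1) : ℂ) else 0 := by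
      have pt : ∀ a a' : Fin b → Bool,
          phiV b f false a a' p * phiV b f false a a' q +
            phiV b f true a a' p * phiV b f true a a' q
          = 2 * ((if p = (false, a) then 1 else 0) * (if q = (false, a) then 1 else 0)) +
            2 * ((if p = (true, a') then 1 else 0) * (if q = (true, a') then 1 else 0)) := by
        intro a a'
        cases hcf : f a a' <;> simp only [phiV, hcf] <;> split_ifs <;> simp_all <;> ring
      simp only [pt, Finset.sum_add_distrib, Finset.sum_const, Finset.card_univ]
      obtain ⟨cp, ap⟩ := p
      obtain ⟨cq, aq⟩ := q
      cases cp <;> cases cq <;>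
        simp [Prod.mk.injEq, mul_ite, ite_mul, Finset.sum_ite_eq, Finset.sum_ite_eq',
          eq_comm, Fintype.card_fun, pow_succ, nsmul_eq_mul] <;> split_ifs <;> ring
    have lhs_eq : ((fun k => (c : ℂ) • ∑ a : Fin b → Bool, ∑ a' : Fin b → Bool,
        Matrix.vecMulVec (phiV b f k a a') (phiV b f k a a')) false +
        (fun k => (c : ℂ) • ∑ a : Fin b → Bool, ∑ a' : Fin b → Bool,
        Matrix.vecMulVec (phiV b f k a a') (phiV b f k a a')) true) p q
        = (c : ℂ) * ∑ a : Fin b → Bool, ∑ a' : Fin b → Bool,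
          (phiV b f false a a' p * phiV b f false a a' q +
            phiV b f true a a' p * phiV b f true a a' q) := by
      simp [Matrix.add_apply, Matrix.smul_apply, Matrix.sum_apply,
        Matrix.vecMulVec_apply, Finset.sum_add_distrib, Finset.mul_sum, smul_eq_mul,
        mul_add]
    rw [lhs_eq, key]
    by_cases hpq : p = q <;> simp [hpq, Matrix.one_apply, hc]
  · intro a0 a1
    set k := f a0 a1 with hk
    have hmv : ((c : ℂ) • ∑ a : Fin b → Bool, ∑ a' : Fin b → Bool,
        Matrix.vecMulVec (phiV b f k a a') (phiV b f k a a')) *ᵥ Psi b a0 a1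
        = (c : ℂ) • ∑ a : Fin b → Bool, ∑ a' : Fin b → Bool,
          (phiV b f k a a' ⬝ᵥ Psi b a0 a1) • phiV b f k a a' := by
      rw [Matrix.smul_mulVec]
      congr 1
      rw [sum_mulVec']
      exact Finset.sum_congr rfl fun a _ => by
        rw [sum_mulVec']
        exact Finset.sum_congr rfl fun a' _ => vecMulVec_mulVec' _ _ _
    rw [hmv]
    have hexp : star (Psi b a0 a1) ⬝ᵥ ((c : ℂ) • ∑ a : Fin b → Bool, ∑ a' : Fin b → Bool,
        (phiV b f k a a' ⬝ᵥ Psi b a0 a1) • phiV b f k a a')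
        = (c : ℂ) * ∑ a : Fin b → Bool, ∑ a' : Fin b → Bool,
          (phiV b f k a a' ⬝ᵥ Psi b a0 a1) * (phiV b f k a a' ⬝ᵥ Psi b a0 a1) := by
      rw [dotProduct_smul, smul_eq_mul]
      congr 1
      rw [dotProduct_sum']
      refine Finset.sum_congr rfl fun a _ => ?_
      rw [dotProduct_sum']
      refine Finset.sum_congr rfl fun a' _ => ?_
      rw [dotProduct_smul, smul_eq_mul, mul_comm]
      congr 1
      rw [star_Psi, dotProduct_comm]
    rw [hexp]
    have h2 : (Real.sqrt 2 : ℂ) * (Real.sqrt 2 : ℂ) = 2 := by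
      norm_cast
      exact_mod_cast Real.mul_self_sqrt (by norm_num)
    have hDD : ∀ a a' : Fin b → Bool,
        (phiV b f k a a' ⬝ᵥ Psi b a0 a1) * (phiV b f k a a' ⬝ᵥ Psi b a0 a1)
        = ((if a = a0 then (1:ℂ) else 0) + (if a' = a1 then 1 else 0) +
            (if a = a0 then (if a' = a1 then (if f a a' = k then (2:ℂ) else -2) else 0)
              else 0)) / 2 := by
      intro a a'
      rw [hdot, div_mul_div_comm, h2]
      congr 1
      split_ifs <;> ring
    rw [Finset.sum_congr rfl fun a _ => Finset.sum_congr rfl fun a' _ => hDD a a']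
    have hsplit : ∑ a : Fin b → Bool, ∑ a' : Fin b → Bool,
        ((if a = a0 then (1:ℂ) else 0) + (if a' = a1 then 1 else 0) +
          (if a = a0 then (if a' = a1 then (if f a a' = k then (2:ℂ) else -2) else 0)
            else 0)) / 2
        = ((2^b : ℂ) + (2^b : ℂ) + 2) / 2 := by
      simp only [← Finset.sum_div]
      congr 1
      rw [Finset.sum_congr rfl fun a _ => Finset.sum_add_distrib, Finset.sum_add_distrib]
      congr 1
      · rw [Finset.sum_congr rfl fun a _ => Finset.sum_add_distrib, Finset.sum_add_distrib]
        congr 1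
        · simp [Finset.sum_const, Finset.card_univ, Finset.sum_ite_eq', Fintype.card_fun]
        · simp [Finset.sum_const, Finset.card_univ, Finset.sum_ite_eq', Fintype.card_fun]
      · rw [Finset.sum_eq_single a0]
        · rw [Finset.sum_eq_single a1]
          · simp [← hk]
          · intro b' _ hb'; simp [hb']
          · intro h; exact absurd (Finset.mem_univ _) h
        · intro a _ ha; simp [ha]
        · intro h; exact absurd (Finset.mem_univ _) h
    rw [hsplit, hc]
    have h2b : ((2:ℂ) ^ (b+1)) ≠ 0 := by positivity
    push_cast
    field_simp
    ring
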